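/- arXiv:2403.17463 — 2 statements merged into one kernel-verified Lean document; each statement's English description precedes it below -/
import Mathlib

section
/- Suppose in addition that u_T satisfies the Oleinik condition (O) at T. Then for every x ∈ ℝ the set M(x) is a nonempty compact interval of ℝ. -/
open Filter MeasureTheory

/-- Condition (f): `f` is `C²`, strongly convex (`f'' > 0` everywhere), and
`f' → ∓∞` at `∓∞`. -/
def CondF (f : ℝ → ℝ) : Prop :=
  ContDiff ℝ 2 f ∧ (∀ x, 0 < deriv (deriv f) x) ∧
    Tendsto (deriv f) atBot atBot ∧ Tendsto (deriv f) atTop atTop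

/-- The Legendre transform `f*(y) = sup_x (y·x − f(x))`. -/
noncomputable def legendre (f : ℝ → ℝ) (y : ℝ) : ℝ :=
  sSup (Set.range fun x => y * x - f x)

/-- `U_T(x) = ∫_{x̌}^x u_T`. -/
noncomputable def UT (uT : ℝ → ℝ) (xc x : ℝ) : ℝ := ∫ ξ in xc..x, uT ξ

/-- `U_o^♭(x) = sup_ξ [U_T(ξ) − T f*((ξ−x)/T)]`. -/
noncomputable def Uflat (f : ℝ → ℝ) (T : ℝ) (uT : ℝ → ℝ) (xc x : ℝ) : ℝ :=
  sSup (Set.range fun ξ => UT uT xc ξ - T * legendre f ((ξ - x) / T))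

/-- `M(x)`: the set of maximizers in the definition of `U_o^♭(x)`. -/
def MSet (f : ℝ → ℝ) (T : ℝ) (uT : ℝ → ℝ) (xc x : ℝ) : Set ℝ :=
  {ξ | UT uT xc ξ = Uflat f T uT xc x + T * legendre f ((ξ - x) / T)}

/-- Oleinik condition (O) at `T`. -/
def Oleinik (f : ℝ → ℝ) (T : ℝ) (uT : ℝ → ℝ) : Prop :=
  ∀ x Δ : ℝ, 0 < Δ → deriv f (uT (x + Δ)) - deriv f (uT x) ≤ Δ / T

/-- The Hopf–Lax operator at time `T`: `(S_T U)(x) = inf_ξ [U(ξ) + T f*((x−ξ)/T)]`. -/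
noncomputable def HopfLax (f : ℝ → ℝ) (T : ℝ) (U : ℝ → ℝ) (x : ℝ) : ℝ :=
  sInf (Set.range fun ξ => U ξ + T * legendre f ((x - ξ) / T))

/-- Left continuity of a real function. -/
def LeftCts (u : ℝ → ℝ) : Prop :=
  ∀ x, Tendsto u (nhdsWithin x (Set.Iio x)) (nhds (u x))

/-- `II_T(U_T; J)`: Lipschitz functions with a.e. derivative in `J` evolving into `U_T`
under the Hopf–Lax semigroup. -/
def IIT (f : ℝ → ℝ) (T : ℝ) (uT : ℝ → ℝ) (xc : ℝ) (J : Set ℝ) : Set (ℝ → ℝ) :=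
  {U | (∃ K, LipschitzWith K U) ∧ (∀ᵐ x ∂volume, deriv U x ∈ J) ∧
    ∀ x, HopfLax f T U x = UT uT xc x}

/-- `U_o^♯(x) = sup { U(x) : U ∈ II_T(U_T; J) }`. -/
noncomputable def Usharp (f : ℝ → ℝ) (T : ℝ) (uT : ℝ → ℝ) (xc : ℝ) (J : Set ℝ) (x : ℝ) : ℝ :=
  sSup ((fun U : ℝ → ℝ => U x) '' IIT f T uT xc J)

lemma legendre_isGreatest {f : ℝ → ℝ} (hd1 : Differentiable ℝ f)
    (hm : StrictMono (deriv f)) {y x0 : ℝ} (h0 : deriv f x0 = y) :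
    IsGreatest (Set.range fun x => y * x - f x) (y * x0 - f x0) := by
  constructor
  · exact ⟨x0, rfl⟩
  · rintro _ ⟨x, rfl⟩
    set h : ℝ → ℝ := fun x => y * x - f x with hh
    have hder : ∀ z, HasDerivAt h (y - deriv f z) z := fun z => by
      exact (((hasDerivAt_id z).const_mul y).sub (hd1 z).hasDerivAt).congr_deriv (by ring)
    have hcont : Continuous h := by
      have : Differentiable ℝ h := fun z => (hder z).differentiableAt
      exact this.continuous
    have hmono : MonotoneOn h (Set.Iic x0) := by
      apply monotoneOn_of_deriv_nonneg (convex_Iic x0) hcont.continuousOn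
      · exact fun z _ => (hder z).differentiableAt.differentiableWithinAt
      · intro z hz
        rw [interior_Iic] at hz
        rw [(hder z).deriv]
        have := hm.monotone (le_of_lt hz)
        rw [h0] at this
        linarith
    have hanti : AntitoneOn h (Set.Ici x0) := by
      apply antitoneOn_of_deriv_nonpos (convex_Ici x0) hcont.continuousOn
      · exact fun z _ => (hder z).differentiableAt.differentiableWithinAt
      · intro z hz
        rw [interior_Ici] at hz
        rw [(hder z).deriv]
        have := hm.monotone (le_of_lt hz)
        rw [h0] at this
        linarith
    rcases le_total x x0 with hx | hx
    · exact hmono hx Set.self_mem_Iic hx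
    · exact hanti Set.self_mem_Ici hx hx

lemma legendre_eq {f : ℝ → ℝ} (hd1 : Differentiable ℝ f)
    (hm : StrictMono (deriv f)) {y x0 : ℝ} (h0 : deriv f x0 = y) :
    legendre f y = y * x0 - f x0 :=
  (legendre_isGreatest hd1 hm h0).csSup_eq

lemma le_legendre {f : ℝ → ℝ} (hd1 : Differentiable ℝ f)
    (hm : StrictMono (deriv f)) (hs : Function.Surjective (deriv f)) (y m : ℝ) :
    y * m - f m ≤ legendre f y := by
  obtain ⟨x0, h0⟩ := hs y
  exact le_csSup (legendre_isGreatest hd1 hm h0).bddAbove ⟨m, rfl⟩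

lemma legendre_hasDerivAt {f : ℝ → ℝ} (hd1 : Differentiable ℝ f)
    (hd2 : Differentiable ℝ (deriv f)) (hpos : ∀ z, 0 < deriv (deriv f) z)
    (hm : StrictMono (deriv f)) {I : ℝ → ℝ} (hIc : Continuous I)
    (hIf : ∀ y, deriv f (I y) = y) (y : ℝ) :
    HasDerivAt (legendre f) (I y) y := by
  have hfun : legendre f = fun z => z * I z - f (I z) :=
    funext fun z => legendre_eq hd1 hm (hIf z)
  have hI : HasDerivAt I (deriv (deriv f) (I y))⁻¹ y := by
    apply HasDerivAt.of_local_left_inverse hIc.continuousAt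
      ((hd2 (I y)).hasDerivAt) (ne_of_gt (hpos (I y)))
    exact Filter.Eventually.of_forall hIf
  have h2 := ((hasDerivAt_id y).mul hI).sub (((hd1 (I y)).hasDerivAt).comp y hI)
  rw [hfun]
  refine h2.congr_deriv ?_
  rw [hIf y]
  simp only [id]
  ring

theorem stmt_8' (f : ℝ → ℝ)
    (hf : ContDiff ℝ 2 f ∧ (∀ x, 0 < deriv (deriv f) x) ∧
      Tendsto (deriv f) atBot atBot ∧ Tendsto (deriv f) atTop atTop)
    (T : ℝ) (hT : 0 < T)
    (uT : ℝ → ℝ) (huT : Measurable uT) (C : ℝ) (hC : ∀ x, |uT x| ≤ C) (xc : ℝ)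
    (hO : Oleinik f T uT) :
    ∀ x : ℝ, ∃ a b : ℝ, a ≤ b ∧ MSet f T uT xc x = Set.Icc a b := by
  obtain ⟨hC2, hpos, hbot, htop⟩ := hf
  have h21 : ContDiff ℝ (1+1) f := by norm_num; exact hC2
  obtain ⟨hd1, -, hCd⟩ := contDiff_succ_iff_deriv.mp h21
  have hd2 : Differentiable ℝ (deriv f) := hCd.differentiable (by norm_num)
  have hm : StrictMono (deriv f) := strictMono_of_deriv_pos hpos
  have hs : Function.Surjective (deriv f) := hd2.continuous.surjective htop hbot
  set E := StrictMono.orderIsoOfSurjective (deriv f) hm hs with hE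
  set I : ℝ → ℝ := fun y => E.symm y with hIdef
  have hIc : Continuous I := E.symm.continuous
  have hIf : ∀ y, deriv f (I y) = y := fun y => by
    have h1 := E.apply_symm_apply y
    rwa [show (E : ℝ → ℝ) = deriv f from StrictMono.coe_orderIsoOfSurjective _ _ _] at h1
  have hLD : ∀ y, HasDerivAt (legendre f) (I y) y :=
    legendre_hasDerivAt hd1 hd2 hpos hm hIc hIf
  have hLc : Continuous (legendre f) :=
    continuous_iff_continuousAt.mpr fun y => (hLD y).differentiableAt.continuousAt
  have hInt : ∀ a b : ℝ, IntervalIntegrable uT volume a b := by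
    intro a b
    rw [intervalIntegrable_iff]
    exact Measure.integrableOn_of_bounded measure_Ioc_lt_top.ne
      huT.aestronglyMeasurable (ae_of_all _ fun s => by simpa using hC s)
  have hUTc : Continuous (UT uT xc) := intervalIntegral.continuous_primitive hInt xc
  have hC0 : 0 ≤ C := (abs_nonneg _).trans (hC 0)
  have hT0 : T ≠ 0 := ne_of_gt hT
  intro x
  set g : ℝ → ℝ := fun ξ => UT uT xc ξ - T * legendre f ((ξ - x) / T) with hg
  have hgc : Continuous g := by
    apply hUTc.sub
    exact continuous_const.mul (hLc.comp (by continuity))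
  have hLD2 : ∀ s : ℝ, HasDerivAt (fun s => T * legendre f ((s - x) / T)) (I ((s - x) / T)) s := by
    intro s
    have h1 : HasDerivAt (fun s : ℝ => (s - x) / T) (1 / T) s := by
      simpa using ((hasDerivAt_id s).sub_const x).div_const T
    have h2 := ((hLD ((s - x) / T)).comp s h1).const_mul T
    refine h2.congr_deriv ?_
    field_simp
  have hIint : ∀ a b : ℝ, IntervalIntegrable (fun s => I ((s - x) / T)) volume a b :=
    fun a b => (hIc.comp (by continuity)).intervalIntegrable a b
  have hgdiff : ∀ a b : ℝ, g b - g a = (∫ s in a..b, uT s) - ∫ s in a..b, I ((s - x) / T) := by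
    intro a b
    have h1 : UT uT xc b - UT uT xc a = ∫ s in a..b, uT s := by
      rw [UT, UT, intervalIntegral.integral_interval_sub_left (hInt xc b) (hInt xc a)]
    have h2 : (∫ s in a..b, I ((s - x) / T))
        = T * legendre f ((b - x) / T) - T * legendre f ((a - x) / T) :=
      intervalIntegral.integral_eq_sub_of_hasDerivAt (fun s _ => hLD2 s) (hIint a b)
    simp only [hg]
    linarith
  have hUb : ∀ ξ, |UT uT xc ξ| ≤ C * |ξ| + C * |xc| := by
    intro ξ
    have h1 : |UT uT xc ξ| ≤ C * |ξ - xc| := by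
      simpa [UT] using intervalIntegral.norm_integral_le_of_norm_le_const
        (f := uT) (a := xc) (b := ξ) (C := C) fun s _ => by simpa using hC s
    have h2 : |ξ - xc| ≤ |ξ| + |xc| := abs_sub ξ xc
    nlinarith
  set K : ℝ := C * |xc| + (C + 1) * |x| + T * max (f (C + 1)) (f (-(C + 1))) with hK
  have hgK : ∀ ξ, g ξ ≤ -|ξ| + K := by
    intro ξ
    have h3 := hUb ξ
    have h3' : UT uT xc ξ ≤ |UT uT xc ξ| := le_abs_self _
    rcases le_total 0 ξ with hξ | hξ
    · have hleg := le_legendre hd1 hm hs ((ξ - x) / T) (C + 1)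
      have h2 : (ξ - x) * (C + 1) - T * f (C + 1) ≤ T * legendre f ((ξ - x) / T) := by
        have h2a := mul_le_mul_of_nonneg_left hleg (le_of_lt hT)
        have h2b : T * ((ξ - x) / T * (C + 1) - f (C + 1))
            = (ξ - x) * (C + 1) - T * f (C + 1) := by field_simp
        linarith
      have h4 : |ξ| = ξ := abs_of_nonneg hξ
      have h5 : (C + 1) * x ≤ (C + 1) * |x| :=
        mul_le_mul_of_nonneg_left (le_abs_self x) (by linarith)
      have h6 : T * f (C + 1) ≤ T * max (f (C + 1)) (f (-(C + 1))) :=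
        mul_le_mul_of_nonneg_left (le_max_left _ _) (le_of_lt hT)
      have hexp : (ξ - x) * (C + 1) = (C + 1) * ξ - (C + 1) * x := by ring
      simp only [hg, hK]
      rw [h4] at h3 ⊢
      linarith
    · have hleg := le_legendre hd1 hm hs ((ξ - x) / T) (-(C + 1))
      have h2 : (ξ - x) * (-(C + 1)) - T * f (-(C + 1)) ≤ T * legendre f ((ξ - x) / T) := by
        have h2a := mul_le_mul_of_nonneg_left hleg (le_of_lt hT)
        have h2b : T * ((ξ - x) / T * (-(C + 1)) - f (-(C + 1)))
            = (ξ - x) * (-(C + 1)) - T * f (-(C + 1)) := by field_simp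
        linarith
      have h4 : |ξ| = -ξ := abs_of_nonpos hξ
      have h5 : -((C + 1) * x) ≤ (C + 1) * |x| := by
        have := neg_abs_le x
        nlinarith
      have h6 : T * f (-(C + 1)) ≤ T * max (f (C + 1)) (f (-(C + 1))) :=
        mul_le_mul_of_nonneg_left (le_max_right _ _) (le_of_lt hT)
      have hexp : (ξ - x) * (-(C + 1)) = -((C + 1) * ξ) + (C + 1) * x := by ring
      simp only [hg, hK]
      rw [h4] at h3 ⊢
      linarith
  set R : ℝ := max (K - g 0) 0 with hR
  have hR0 : 0 ≤ R := le_max_right _ _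
  have h0mem : (0 : ℝ) ∈ Set.Icc (-(R + 1)) (R + 1) := by
    constructor <;> linarith
  obtain ⟨ξs, hξsS, hmax⟩ := isCompact_Icc.exists_isMaxOn (s := Set.Icc (-(R + 1)) (R + 1))
    ⟨0, h0mem⟩ hgc.continuousOn
  have hKR : K - g 0 ≤ R := le_max_left _ _
  have hglob : ∀ ξ, g ξ ≤ g ξs := by
    intro ξ
    by_cases hmem : ξ ∈ Set.Icc (-(R + 1)) (R + 1)
    · exact hmax hmem
    · have h1 : R + 1 ≤ |ξ| := by
        rcases lt_or_ge ξ (-(R + 1)) with h | h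
        · rw [abs_of_neg (by linarith : ξ < 0)]
          linarith
        · have h' : R + 1 < ξ := by
            rcases lt_or_ge (R + 1) ξ with h' | h'
            · exact h'
            · exact absurd ⟨h, h'⟩ hmem
          rw [abs_of_pos (by linarith : 0 < ξ)]
          linarith
      have h2 := hgK ξ
      have h3 : g ξ ≤ g 0 := by linarith
      exact h3.trans (hmax h0mem)
  have hUflat : Uflat f T uT xc x = g ξs := by
    apply IsGreatest.csSup_eq
    exact ⟨⟨ξs, rfl⟩, by rintro _ ⟨ξ, rfl⟩; exact hglob ξ⟩
  have hMeq : MSet f T uT xc x = {ξ | g ξs ≤ g ξ} := by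
    ext ξ
    simp only [MSet, Set.mem_setOf_eq, hUflat]
    constructor
    · intro h
      simp only [hg]
      linarith
    · intro h
      have h2 := hglob ξ
      simp only [hg] at h h2 ⊢
      linarith
  have hMbel : BddBelow (MSet f T uT xc x) := by
    refine ⟨-(R + 1), fun ξ hξ => ?_⟩
    rw [hMeq] at hξ
    have h2 := hgK ξ
    have h3 : g 0 ≤ g ξ := (hmax h0mem).trans hξ
    have h4 : |ξ| ≤ R + 1 := by linarith
    linarith [(abs_le.mp h4).1]
  have hMabv : BddAbove (MSet f T uT xc x) := by
    refine ⟨R + 1, fun ξ hξ => ?_⟩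
    rw [hMeq] at hξ
    have h2 := hgK ξ
    have h3 : g 0 ≤ g ξ := (hmax h0mem).trans hξ
    have h4 : |ξ| ≤ R + 1 := by linarith
    exact (abs_le.mp h4).2
  have hMne : (MSet f T uT xc x).Nonempty := ⟨ξs, by rw [hMeq]; exact (le_rfl : g ξs ≤ g ξs)⟩
  have hMcl : IsClosed (MSet f T uT xc x) := by
    rw [hMeq]
    exact isClosed_le continuous_const hgc
  have hinf := hMcl.csInf_mem hMne hMbel
  have hsup := hMcl.csSup_mem hMne hMabv
  -- key interval lemma
  have key : ∀ ξ1 ξ2 ξ : ℝ, g ξs ≤ g ξ1 → g ξs ≤ g ξ2 → ξ1 ≤ ξ → ξ ≤ ξ2 → g ξs ≤ g ξ := by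
    intro ξ1 ξ2 ξ h1 h2 hle1 hle2
    have hψanti : ∀ s t : ℝ, s ≤ t →
        deriv f (uT t) - (t - x) / T ≤ deriv f (uT s) - (s - x) / T := by
      intro s t hst
      rcases eq_or_lt_of_le hst with rfl | hlt
      · exact le_refl _
      · have h3 := hO s (t - s) (by linarith)
        have h4 : s + (t - s) = t := by ring
        rw [h4] at h3
        have h5 : (t - x) / T - (s - x) / T = (t - s) / T := by
          field_simp
          ring
        linarith
    rcases le_or_gt 0 (deriv f (uT ξ) - (ξ - x) / T) with hc0 | hc0
    · have hpt : ∀ s ∈ Set.Icc ξ1 ξ, I ((s - x) / T) ≤ uT s := by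
        intro s hsmem
        have h6 := hψanti s ξ hsmem.2
        have h7 : deriv f (I ((s - x) / T)) ≤ deriv f (uT s) := by
          rw [hIf]
          linarith
        exact hm.le_iff_le.mp h7
      have h8 : (∫ s in ξ1..ξ, I ((s - x) / T)) ≤ ∫ s in ξ1..ξ, uT s :=
        intervalIntegral.integral_mono_on hle1 (hIint _ _) (hInt _ _) hpt
      have h9 := hgdiff ξ1 ξ
      have h10 : g ξ1 ≤ g ξ := by
        rw [← sub_nonneg, h9]
        exact sub_nonneg.mpr h8
      exact h1.trans h10
    · have hpt : ∀ s ∈ Set.Icc ξ ξ2, uT s ≤ I ((s - x) / T) := by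
        intro s hsmem
        have h6 := hψanti ξ s hsmem.1
        have h7 : deriv f (uT s) ≤ deriv f (I ((s - x) / T)) := by
          rw [hIf]
          linarith
        exact hm.le_iff_le.mp h7
      have h8 : (∫ s in ξ..ξ2, uT s) ≤ ∫ s in ξ..ξ2, I ((s - x) / T) :=
        intervalIntegral.integral_mono_on hle2 (hInt _ _) (hIint _ _) hpt
      have h9 := hgdiff ξ ξ2
      have h10 : g ξ2 ≤ g ξ := by
        rw [← sub_nonpos, h9]
        exact sub_nonpos.mpr h8
      exact h2.trans h10
  refine ⟨sInf (MSet f T uT xc x), sSup (MSet f T uT xc x),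
    csInf_le_csSup hMne hMbel hMabv, ?_⟩
  apply Set.Subset.antisymm
  · intro ξ hξ
    exact ⟨csInf_le hMbel hξ, le_csSup hMabv hξ⟩
  · intro ξ hξ
    have hinfval : g ξs ≤ g (sInf (MSet f T uT xc x)) :=
      (Set.ext_iff.mp hMeq (sInf (MSet f T uT xc x))).mp hinf
    have hsupval : g ξs ≤ g (sSup (MSet f T uT xc x)) :=
      (Set.ext_iff.mp hMeq (sSup (MSet f T uT xc x))).mp hsup
    exact (Set.ext_iff.mp hMeq ξ).mpr (key _ _ _ hinfval hsupval hξ.1 hξ.2)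

theorem stmt_8 (f : ℝ → ℝ) (hf : CondF f) (T : ℝ) (hT : 0 < T)
    (uT : ℝ → ℝ) (huT : Measurable uT) (C : ℝ) (hC : ∀ x, |uT x| ≤ C) (xc : ℝ)
    (hO : Oleinik f T uT) :
    ∀ x : ℝ, ∃ a b : ℝ, a ≤ b ∧ MSet f T uT xc x = Set.Icc a b :=
  stmt_8' f hf T hT uT huT C hC xc hO
end

section
/- (Theorem flat, Hopf–Lax form.) Let J be a nonempty closed interval of ℝ, and suppose u_T takes values in J and satisfies the Oleinik condition (O) at T. Then U_o^♭ is Lipschitz continuous with a.e. derivative in J, and for every x ∈ ℝ one has U_T(x) = inf_{ξ ∈ ℝ} [U_o^♭(ξ) + T·f*((x − ξ)/T)]; that is, the Hopf–Lax evolution at time T of U_o^♭ equals U_T. -/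
open Filter MeasureTheory

section aux
variable {f : ℝ → ℝ}

lemma condF_sm (hf : CondF f) : StrictMono (deriv f) :=
  strictMono_of_deriv_pos hf.2.1

lemma condF_surj (hf : CondF f) : Function.Surjective (deriv f) :=
  Continuous.surjective (hf.1.continuous_deriv one_le_two) hf.2.2.2 hf.2.2.1

lemma condF_tangent (hf : CondF f) (a x : ℝ) : f a + deriv f a * (x - a) ≤ f x := by
  have hd : Differentiable ℝ f := hf.1.differentiable two_ne_zero
  rcases lt_trichotomy a x with h | h | h
  · obtain ⟨c, hc, hceq⟩ := exists_hasDerivAt_eq_slope f (deriv f) h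
      hd.continuous.continuousOn (fun y _ => (hd y).hasDerivAt)
    have h1 : deriv f a ≤ deriv f c := ((condF_sm hf).le_iff_le).2 hc.1.le
    have hxa : (0:ℝ) < x - a := by linarith
    have : deriv f a * (x - a) ≤ deriv f c * (x - a) :=
      mul_le_mul_of_nonneg_right h1 hxa.le
    rw [hceq, div_mul_cancel₀ _ (ne_of_gt hxa)] at this
    linarith
  · simp [h]
  · obtain ⟨c, hc, hceq⟩ := exists_hasDerivAt_eq_slope f (deriv f) h
      hd.continuous.continuousOn (fun y _ => (hd y).hasDerivAt)
    have h1 : deriv f c ≤ deriv f a := ((condF_sm hf).le_iff_le).2 hc.2.le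
    have hxa : (0:ℝ) < a - x := by linarith
    have : deriv f c * (a - x) ≤ deriv f a * (a - x) :=
      mul_le_mul_of_nonneg_right h1 hxa.le
    rw [hceq, div_mul_cancel₀ _ (ne_of_gt hxa)] at this
    nlinarith

lemma legendre_bddAbove (hf : CondF f) (y : ℝ) :
    BddAbove (Set.range fun x => y * x - f x) := by
  obtain ⟨c, hc⟩ := condF_surj hf y
  refine ⟨y * c - f c, ?_⟩
  rintro _ ⟨x, rfl⟩
  have h := condF_tangent hf c x
  rw [hc] at h
  simp only [Set.mem_setOf_eq]
  nlinarith

lemma legendre_ge (hf : CondF f) (y x : ℝ) : y * x - f x ≤ legendre f y :=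
  le_csSup (legendre_bddAbove hf y) ⟨x, rfl⟩

lemma legendre_eq_s10 (hf : CondF f) {y c : ℝ} (hc : deriv f c = y) :
    legendre f y = y * c - f c := by
  refine le_antisymm (csSup_le (Set.range_nonempty _) ?_) (legendre_ge hf y c)
  rintro _ ⟨x, rfl⟩
  have h := condF_tangent hf c x
  rw [hc] at h
  show y * x - f x ≤ y * c - f c
  nlinarith [mul_sub y x c]

/-- The inverse of `deriv f`. -/
noncomputable def ginv (f : ℝ → ℝ) (hf : CondF f) : ℝ → ℝ :=
  (StrictMono.orderIsoOfSurjective (deriv f) (condF_sm hf) (condF_surj hf)).symm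

lemma ginv_right (hf : CondF f) (y : ℝ) : deriv f (ginv f hf y) = y :=
  StrictMono.orderIsoOfSurjective_self_symm_apply _ _ _ y

lemma ginv_left (hf : CondF f) (u : ℝ) : ginv f hf (deriv f u) = u :=
  StrictMono.orderIsoOfSurjective_symm_apply_self _ _ _ u

lemma ginv_mono (hf : CondF f) : Monotone (ginv f hf) :=
  (StrictMono.orderIsoOfSurjective (deriv f) (condF_sm hf)
    (condF_surj hf)).symm.monotone

lemma ginv_cont (hf : CondF f) : Continuous (ginv f hf) :=
  (StrictMono.orderIsoOfSurjective (deriv f) (condF_sm hf)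
    (condF_surj hf)).symm.continuous

lemma legendre_hasDerivAt_s10 (hf : CondF f) (y : ℝ) :
    HasDerivAt (legendre f) (ginv f hf y) y := by
  set g := ginv f hf with hg
  have key : ∀ z : ℝ, 0 ≤ legendre f z - legendre f y - g y * (z - y) ∧
      legendre f z - legendre f y - g y * (z - y) ≤ (g z - g y) * (z - y) := by
    intro z
    have h1 := legendre_ge hf z (g y)
    have h2 := legendre_eq_s10 hf (ginv_right hf y)
    have h3 := legendre_ge hf y (g z)
    have h4 := legendre_eq_s10 hf (ginv_right hf z)
    constructor <;> nlinarith
  rw [hasDerivAt_iff_isLittleO, Asymptotics.isLittleO_iff]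
  intro ε hε
  filter_upwards [(ginv_cont hf |>.tendsto y).eventually
    (eventually_abs_sub_lt (g y) hε)] with z hz
  obtain ⟨hl, hu⟩ := key z
  have h1 : |legendre f z - legendre f y - (z - y) * g y| ≤ ε * |z - y| := by
    rw [abs_le]
    constructor
    · nlinarith [abs_nonneg (z - y), hε.le]
    · calc legendre f z - legendre f y - (z - y) * g y ≤ (g z - g y) * (z - y) := by
            nlinarith
      _ ≤ |(g z - g y) * (z - y)| := le_abs_self _
      _ = |g z - g y| * |z - y| := abs_mul _ _
      _ ≤ ε * |z - y| := mul_le_mul_of_nonneg_right hz.le (abs_nonneg _)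
  simpa [Real.norm_eq_abs, smul_eq_mul, mul_comm] using h1

end aux

section aux2
variable {uT : ℝ → ℝ} {C : ℝ}

lemma uT_ii (huT : Measurable uT) (hC : ∀ x, |uT x| ≤ C) (a b : ℝ) :
    IntervalIntegrable uT volume a b := by
  apply IntervalIntegrable.mono_fun (f := fun _ : ℝ => |C|)
    intervalIntegrable_const huT.aestronglyMeasurable.restrict
  exact Eventually.of_forall fun x => by
    simpa [Real.norm_eq_abs] using (hC x).trans (le_abs_self C)

lemma UT_sub (huT : Measurable uT) (hC : ∀ x, |uT x| ≤ C) (xc a b : ℝ) :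
    UT uT xc b - UT uT xc a = ∫ s in a..b, uT s := by
  have h := intervalIntegral.integral_add_adjacent_intervals
    (uT_ii huT hC xc a) (uT_ii huT hC a b)
  unfold UT
  linarith

lemma UT_le (huT : Measurable uT) (hC : ∀ x, |uT x| ≤ C) {M : ℝ}
    (hM : ∀ s, uT s ≤ M) (xc : ℝ) {a b : ℝ} (hab : a ≤ b) :
    UT uT xc b - UT uT xc a ≤ M * (b - a) := by
  rw [UT_sub huT hC]
  calc (∫ s in a..b, uT s) ≤ ∫ _ in a..b, M :=
        intervalIntegral.integral_mono_on hab (uT_ii huT hC a b)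
          intervalIntegrable_const (fun s _ => hM s)
    _ = M * (b - a) := by simp [mul_comm]

lemma UT_ge (huT : Measurable uT) (hC : ∀ x, |uT x| ≤ C) {m : ℝ}
    (hm : ∀ s, m ≤ uT s) (xc : ℝ) {a b : ℝ} (hab : a ≤ b) :
    m * (b - a) ≤ UT uT xc b - UT uT xc a := by
  rw [UT_sub huT hC]
  calc m * (b - a) = ∫ _ in a..b, m := by simp [mul_comm]
    _ ≤ ∫ s in a..b, uT s :=
        intervalIntegral.integral_mono_on hab intervalIntegrable_const
          (uT_ii huT hC a b) (fun s _ => hm s)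

end aux2


lemma Uflat_def (f : ℝ → ℝ) (T : ℝ) (uT : ℝ → ℝ) (xc x : ℝ) :
    Uflat f T uT xc x
      = sSup (Set.range fun ξ => UT uT xc ξ - T * legendre f ((ξ - x) / T)) := rfl

theorem stmt_10 (f : ℝ → ℝ) (hf : CondF f) (T : ℝ) (hT : 0 < T)
    (J : Set ℝ) (hJne : J.Nonempty) (hJcl : IsClosed J) (hJoc : J.OrdConnected)
    (uT : ℝ → ℝ) (huT : Measurable uT) (C : ℝ) (hC : ∀ x, |uT x| ≤ C)
    (huTJ : ∀ x, uT x ∈ J) (hO : Oleinik f T uT) (xc : ℝ) :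
    (∃ K, LipschitzWith K (Uflat f T uT xc)) ∧
    (∀ᵐ x ∂volume, HasDerivAt (Uflat f T uT xc) (deriv (Uflat f T uT xc) x) x ∧
      deriv (Uflat f T uT xc) x ∈ J) ∧
    ∀ x : ℝ, HopfLax f T (Uflat f T uT xc) x = UT uT xc x := by
  have hT' : T ≠ 0 := ne_of_gt hT
  have hC0 : (0:ℝ) ≤ C := (abs_nonneg _).trans (hC 0)
  -- upper bound for the defining family of `Uflat`
  have hUB : ∀ x ξ : ℝ, UT uT xc ξ - T * legendre f ((ξ - x) / T) ≤
      UT uT xc x + T * max (f (C + 1)) (f (-(C + 1))) := by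
    intro x ξ
    rcases le_total x ξ with h | h
    · have h1 : UT uT xc ξ - UT uT xc x ≤ C * (ξ - x) :=
        UT_le huT hC (fun s => (abs_le.1 (hC s)).2) xc h
      have h2 : ((ξ - x) / T) * (C + 1) - f (C + 1) ≤ legendre f ((ξ - x) / T) :=
        legendre_ge hf _ _
      have h3 : T * (((ξ - x) / T) * (C + 1) - f (C + 1)) ≤
          T * legendre f ((ξ - x) / T) := mul_le_mul_of_nonneg_left h2 hT.le
      have h4 : T * (((ξ - x) / T) * (C + 1) - f (C + 1))
          = (ξ - x) * (C + 1) - T * f (C + 1) := by field_simp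
      rw [h4] at h3
      have h5 : T * f (C + 1) ≤ T * max (f (C + 1)) (f (-(C + 1))) :=
        mul_le_mul_of_nonneg_left (le_max_left _ _) hT.le
      have hx : (ξ - x) * (C + 1) = C * (ξ - x) + (ξ - x) := by ring
      have h6 : (0:ℝ) ≤ ξ - x := by linarith
      linarith
    · have h1 : -C * (x - ξ) ≤ UT uT xc x - UT uT xc ξ :=
        UT_ge huT hC (fun s => (abs_le.1 (hC s)).1) xc h
      have h2 : ((ξ - x) / T) * (-(C + 1)) - f (-(C + 1)) ≤ legendre f ((ξ - x) / T) :=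
        legendre_ge hf _ _
      have h3 : T * (((ξ - x) / T) * (-(C + 1)) - f (-(C + 1))) ≤
          T * legendre f ((ξ - x) / T) := mul_le_mul_of_nonneg_left h2 hT.le
      have h4 : T * (((ξ - x) / T) * (-(C + 1)) - f (-(C + 1)))
          = (ξ - x) * (-(C + 1)) - T * f (-(C + 1)) := by field_simp
      rw [h4] at h3
      have h5 : T * f (-(C + 1)) ≤ T * max (f (C + 1)) (f (-(C + 1))) :=
        mul_le_mul_of_nonneg_left (le_max_right _ _) hT.le
      have hx : (ξ - x) * (-(C + 1)) = C * (x - ξ) + (x - ξ) := by ring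
      have h6 : (0:ℝ) ≤ x - ξ := by linarith
      linarith
  have hBdd : ∀ x : ℝ,
      BddAbove (Set.range fun ξ => UT uT xc ξ - T * legendre f ((ξ - x) / T)) := by
    intro x
    exact ⟨UT uT xc x + T * max (f (C + 1)) (f (-(C + 1))), by
      rintro _ ⟨ξ, rfl⟩; exact hUB x ξ⟩
  -- the interval J' and its endpoints
  have hJ'ne : (J ∩ Set.Icc (-C) C).Nonempty := ⟨uT 0, huTJ 0, abs_le.1 (hC 0)⟩
  have hJ'bb : BddBelow (J ∩ Set.Icc (-C) C) := ⟨-C, fun z hz => hz.2.1⟩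
  have hJ'ba : BddAbove (J ∩ Set.Icc (-C) C) := ⟨C, fun z hz => hz.2.2⟩
  set m := sInf (J ∩ Set.Icc (-C) C) with hm
  set M := sSup (J ∩ Set.Icc (-C) C) with hM
  have hmJ' : m ∈ J ∩ Set.Icc (-C) C :=
    (hJcl.inter isClosed_Icc).csInf_mem hJ'ne hJ'bb
  have hMJ' : M ∈ J ∩ Set.Icc (-C) C :=
    (hJcl.inter isClosed_Icc).csSup_mem hJ'ne hJ'ba
  have hum : ∀ s, m ≤ uT s := fun s => csInf_le hJ'bb ⟨huTJ s, abs_le.1 (hC s)⟩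
  have huM : ∀ s, uT s ≤ M := fun s => le_csSup hJ'ba ⟨huTJ s, abs_le.1 (hC s)⟩
  -- two-sided increment bounds for Uflat
  have hpair : ∀ a b : ℝ, a ≤ b →
      m * (b - a) ≤ Uflat f T uT xc b - Uflat f T uT xc a ∧
      Uflat f T uT xc b - Uflat f T uT xc a ≤ M * (b - a) := by
    intro a b hab
    constructor
    · have : Uflat f T uT xc a ≤ Uflat f T uT xc b - m * (b - a) := by
        rw [Uflat_def]
        refine csSup_le (Set.range_nonempty _) ?_
        rintro _ ⟨ξ, rfl⟩
        have h1 : UT uT xc (ξ + (b - a)) - T * legendre f ((ξ + (b - a) - b) / T) ≤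
            Uflat f T uT xc b := le_csSup (hBdd b) ⟨ξ + (b - a), rfl⟩
        have h2 : m * (ξ + (b - a) - ξ) ≤ UT uT xc (ξ + (b - a)) - UT uT xc ξ :=
          UT_ge huT hC hum xc (by linarith)
        have e1 : (ξ + (b - a) - b) / T = (ξ - a) / T := by ring_nf
        have e2 : m * (ξ + (b - a) - ξ) = m * (b - a) := by ring_nf
        rw [e1] at h1
        rw [e2] at h2
        show UT uT xc ξ - T * legendre f ((ξ - a) / T) ≤ _
        linarith
      linarith
    · have : Uflat f T uT xc b ≤ Uflat f T uT xc a + M * (b - a) := by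
        rw [Uflat_def]
        refine csSup_le (Set.range_nonempty _) ?_
        rintro _ ⟨ξ, rfl⟩
        have h1 : UT uT xc (ξ - (b - a)) - T * legendre f ((ξ - (b - a) - a) / T) ≤
            Uflat f T uT xc a := le_csSup (hBdd a) ⟨ξ - (b - a), rfl⟩
        have h2 : UT uT xc ξ - UT uT xc (ξ - (b - a)) ≤ M * (ξ - (ξ - (b - a))) :=
          UT_le huT hC huM xc (by linarith)
        have e1 : (ξ - (b - a) - a) / T = (ξ - b) / T := by ring_nf
        have e2 : M * (ξ - (ξ - (b - a))) = M * (b - a) := by ring_nf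
        rw [e1] at h1
        rw [e2] at h2
        show UT uT xc ξ - T * legendre f ((ξ - b) / T) ≤ _
        linarith
      linarith
  -- Lipschitz
  have hK0 : (0:ℝ) ≤ max |m| |M| := le_trans (abs_nonneg m) (le_max_left _ _)
  have hlip : LipschitzWith (Real.toNNReal (max |m| |M|)) (Uflat f T uT xc) := by
    apply LipschitzWith.of_dist_le_mul
    intro a b
    rw [Real.dist_eq, Real.dist_eq, Real.coe_toNNReal _ hK0]
    have key : ∀ a b : ℝ, a ≤ b →
        |Uflat f T uT xc b - Uflat f T uT xc a| ≤ max |m| |M| * (b - a) := by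
      intro a b hab
      obtain ⟨hl, hh⟩ := hpair a b hab
      have hba : (0:ℝ) ≤ b - a := by linarith
      have p1 : |m| * (b - a) ≤ max |m| |M| * (b - a) :=
        mul_le_mul_of_nonneg_right (le_max_left _ _) hba
      have p2 : |M| * (b - a) ≤ max |m| |M| * (b - a) :=
        mul_le_mul_of_nonneg_right (le_max_right _ _) hba
      have p3 : -|m| * (b - a) ≤ m * (b - a) :=
        mul_le_mul_of_nonneg_right (neg_abs_le m) hba
      have p4 : M * (b - a) ≤ |M| * (b - a) :=
        mul_le_mul_of_nonneg_right (le_abs_self M) hba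
      rw [abs_le]
      constructor <;> linarith
    rcases le_total a b with h | h
    · have := key a b h
      rw [abs_sub_comm] at this
      calc |Uflat f T uT xc a - Uflat f T uT xc b| ≤ max |m| |M| * (b - a) := this
        _ = max |m| |M| * |a - b| := by
            rw [abs_sub_comm, abs_of_nonneg (by linarith : (0:ℝ) ≤ b - a)]
    · have := key b a h
      calc |Uflat f T uT xc a - Uflat f T uT xc b| ≤ max |m| |M| * (a - b) := this
        _ = max |m| |M| * |a - b| := by
            rw [abs_of_nonneg (by linarith : (0:ℝ) ≤ a - b)]
  refine ⟨⟨_, hlip⟩, ?_, ?_⟩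
  · -- a.e. differentiability with derivative in J
    filter_upwards [hlip.ae_differentiableAt (μ := volume)] with x hx
    have hd : HasDerivAt (Uflat f T uT xc) (deriv (Uflat f T uT xc) x) x :=
      hx.hasDerivAt
    refine ⟨hd, ?_⟩
    have ht : Tendsto (slope (Uflat f T uT xc) x) (nhdsWithin x (Set.Ioi x))
        (nhds (deriv (Uflat f T uT xc) x)) :=
      (hasDerivAt_iff_tendsto_slope.1 hd).mono_left
        (nhdsWithin_mono x fun y hy => Set.mem_compl_singleton_iff.2 (ne_of_gt hy))
    have hmem : deriv (Uflat f T uT xc) x ∈ Set.Icc m M := by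
      constructor
      · refine ge_of_tendsto ht (eventually_nhdsWithin_of_forall fun y hy => ?_)
        have hxy : (0:ℝ) < y - x := sub_pos.2 hy
        rw [slope_def_field]
        rw [le_div_iff₀ hxy]
        exact (hpair x y (le_of_lt hy)).1
      · refine le_of_tendsto ht (eventually_nhdsWithin_of_forall fun y hy => ?_)
        have hxy : (0:ℝ) < y - x := sub_pos.2 hy
        rw [slope_def_field]
        rw [div_le_iff₀ hxy]
        exact (hpair x y (le_of_lt hy)).2
    exact hJoc.out hmJ'.1 hMJ'.1 hmem
  · -- Hopf–Lax inversion
    intro x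
    set bb := deriv f (uT x) with hbb
    set ξ0 := x - T * bb with hξ0
    have hxarg : (x - ξ0) / T = bb := by rw [hξ0]; field_simp; ring
    have hG : ∀ s : ℝ, HasDerivAt (fun t => T * legendre f ((t - ξ0) / T))
        (ginv f hf ((s - ξ0) / T)) s := by
      intro s
      have h1 : HasDerivAt (fun t : ℝ => (t - ξ0) / T) (1 / T) s := by
        simpa using ((hasDerivAt_id s).sub_const ξ0).div_const T
      have h2 := (legendre_hasDerivAt_s10 hf ((s - ξ0) / T)).comp s h1
      have h3 := h2.const_mul T
      simp only [Function.comp] at h3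
      exact h3.congr_deriv (by rw [← mul_assoc, mul_comm T, mul_assoc, mul_one_div_cancel hT', mul_one])
    have hii : ∀ a b : ℝ,
        IntervalIntegrable (fun s => ginv f hf ((s - ξ0) / T)) volume a b := by
      intro a b
      exact ((ginv_cont hf).comp (by continuity)).intervalIntegrable a b
    have hFTC : ∀ a b : ℝ, (∫ s in a..b, ginv f hf ((s - ξ0) / T))
        = T * legendre f ((b - ξ0) / T) - T * legendre f ((a - ξ0) / T) := by
      intro a b
      exact intervalIntegral.integral_eq_sub_of_hasDerivAt (fun s _ => hG s) (hii a b)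
    have hub : ∀ s, x ≤ s → uT s ≤ ginv f hf ((s - ξ0) / T) := by
      intro s hs
      rcases eq_or_lt_of_le hs with heq | h
      · subst heq
        have he : ginv f hf ((x - ξ0) / T) = uT x := by
          rw [hxarg, hbb, ginv_left hf (uT x)]
        exact he.ge
      · have hO' := hO x (s - x) (by linarith)
        have hsx : x + (s - x) = s := by ring
        rw [hsx] at hO'
        have harg : (s - ξ0) / T = (s - x) / T + bb := by rw [hξ0]; field_simp; ring
        have h1 : deriv f (uT s) ≤ (s - ξ0) / T := by rw [harg, hbb]; linarith
        have h2 := ginv_mono hf h1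
        rwa [ginv_left hf (uT s)] at h2
    have hlb : ∀ s, s ≤ x → ginv f hf ((s - ξ0) / T) ≤ uT s := by
      intro s hs
      rcases eq_or_lt_of_le hs with heq | h
      · have he : ginv f hf ((s - ξ0) / T) = uT s := by
          rw [heq, hxarg, hbb]
          exact ginv_left hf (uT x)
        exact he.le
      · have hO' := hO s (x - s) (by linarith)
        have hsx : s + (x - s) = x := by ring
        rw [hsx] at hO'
        have harg : (s - ξ0) / T = (s - x) / T + bb := by rw [hξ0]; field_simp; ring
        have hflip : (s - x) / T = -((x - s) / T) := by ring
        have h1 : (s - ξ0) / T ≤ deriv f (uT s) := by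
          rw [harg, hflip, hbb]; linarith
        have h2 := ginv_mono hf h1
        rwa [ginv_left hf (uT s)] at h2
    have hmax : ∀ η : ℝ, UT uT xc η - T * legendre f ((η - ξ0) / T) ≤
        UT uT xc x - T * legendre f ((x - ξ0) / T) := by
      intro η
      rcases le_total x η with h | h
      · have h1 : UT uT xc η - UT uT xc x = ∫ s in x..η, uT s := UT_sub huT hC xc x η
        have h2 : (∫ s in x..η, uT s) ≤ ∫ s in x..η, ginv f hf ((s - ξ0) / T) :=
          intervalIntegral.integral_mono_on h (uT_ii huT hC x η) (hii x η)
            (fun s hsmem => hub s hsmem.1)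
        rw [hFTC x η] at h2
        linarith
      · have h1 : UT uT xc x - UT uT xc η = ∫ s in η..x, uT s := UT_sub huT hC xc η x
        have h2 : (∫ s in η..x, ginv f hf ((s - ξ0) / T)) ≤ ∫ s in η..x, uT s :=
          intervalIntegral.integral_mono_on h (hii η x) (uT_ii huT hC η x)
            (fun s hsmem => hlb s hsmem.2)
        rw [hFTC η x] at h2
        linarith
    have hUfξ0 : Uflat f T uT xc ξ0 = UT uT xc x - T * legendre f ((x - ξ0) / T) := by
      rw [Uflat_def]
      refine le_antisymm (csSup_le (Set.range_nonempty _) ?_)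
        (le_csSup (hBdd ξ0) ⟨x, rfl⟩)
      rintro _ ⟨η, rfl⟩
      exact hmax η
    have hlow2 : ∀ ξ : ℝ, UT uT xc x ≤ Uflat f T uT xc ξ + T * legendre f ((x - ξ) / T) := by
      intro ξ
      have h1 : UT uT xc x - T * legendre f ((x - ξ) / T) ≤ Uflat f T uT xc ξ :=
        le_csSup (hBdd ξ) ⟨x, rfl⟩
      linarith
    show sInf (Set.range fun ξ => Uflat f T uT xc ξ + T * legendre f ((x - ξ) / T))
        = UT uT xc x
    refine le_antisymm (csInf_le ⟨UT uT xc x, ?_⟩ ⟨ξ0, ?_⟩)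
      (le_csInf (Set.range_nonempty _) ?_)
    · rintro _ ⟨ξ, rfl⟩
      exact hlow2 ξ
    · show Uflat f T uT xc ξ0 + T * legendre f ((x - ξ0) / T) = UT uT xc x
      rw [hUfξ0]; ring
    · rintro _ ⟨ξ, rfl⟩
      exact hlow2 ξ
end
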